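/- Let h : [0,1] → [0,1] be a Lebesgue-measure-preserving bijection with measurable measure-preserving inverse. Define ℓ(A_h) = ∫_{(0,1)²} ‖∇A_h(u,v)‖₂ dλ₂(u,v), where ∇A_h(u,v) = (𝟙_{[0,v]}(h(u)), 𝟙_{[0,u]}(h⁻¹(v))) almost everywhere. Then ℓ(A_h) = 1 − (2 − √2)·λ₂(Ω√2), where Ω√2 = {(u,v) ∈ (0,1)² : h(u) ≤ v and h⁻¹(v) ≤ u}. -/

import Mathlib

open MeasureTheory Set

-- volume of Ici in unitInterval
lemma aux_vol_Ici (a : unitInterval) :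
    volume (Ici a) = ENNReal.ofReal (1 - a) := by
  have : (Ici a : Set unitInterval) = (Subtype.val) ⁻¹' (Ici (a:ℝ)) := by
    ext x; simp [Subtype.coe_le_coe]
  rw [this, volume_preimage_coe nullMeasurableSet_Icc measurableSet_Ici]
  rw [show Ici (a:ℝ) ∩ Icc 0 1 = Icc (a:ℝ) 1 by
    ext x
    simp only [mem_inter_iff, mem_Ici, mem_Icc]
    exact ⟨fun ⟨h1, _, h3⟩ => ⟨h1, h3⟩, fun ⟨h1, h3⟩ => ⟨h1, a.2.1.trans h1, h3⟩⟩]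
  rw [Real.volume_Icc]

lemma aux_lint : ∫⁻ (x : unitInterval), ENNReal.ofReal (1 - x)
    = ENNReal.ofReal (1/2) := by
  have h1 : ∫⁻ (x : unitInterval), ENNReal.ofReal (1 - x)
      = ∫⁻ x in Icc (0:ℝ) 1, ENNReal.ofReal (1 - x) := by
    rw [← measurableSet_Icc.map_coe_volume,
      (MeasurableEmbedding.subtype_coe measurableSet_Icc).lintegral_map]
  have hint : IntegrableOn (fun x : ℝ => 1 - x) (Icc 0 1) := by
    apply Continuous.integrableOn_Icc; continuity
  rw [h1, ← ofReal_integral_eq_lintegral_ofReal hint]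
  · congr 1
    rw [integral_Icc_eq_integral_Ioc,
      ← intervalIntegral.integral_of_le (by norm_num : (0:ℝ) ≤ 1)]
    simp [intervalIntegral.integral_sub intervalIntegrable_const
      intervalIntegral.intervalIntegrable_id]
    norm_num
  · filter_upwards [ae_restrict_mem measurableSet_Icc] with x hx
    simp; linarith [hx.2]

lemma aux_vol_singleton (a : unitInterval) : volume ({a} : Set unitInterval) = 0 := by
  have : ({a} : Set unitInterval) = (Subtype.val) ⁻¹' ({(a:ℝ)}) := by
    ext x; simp [Subtype.ext_iff]
  rw [this, volume_preimage_coe nullMeasurableSet_Icc (measurableSet_singleton _)]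
  exact measure_mono_null inter_subset_left (Real.volume_singleton)

theorem stmt_7 (h g : unitInterval → unitInterval)
    (hbij : Function.Bijective h)
    (hmp : MeasurePreserving h volume volume)
    (hgl : Function.LeftInverse g h) (hgr : Function.RightInverse g h)
    (hgmeas : Measurable g) (hgmp : MeasurePreserving g volume volume) :
    (∫ p in {p : unitInterval × unitInterval | 0 < p.1 ∧ p.1 < 1 ∧ 0 < p.2 ∧ p.2 < 1},
        Real.sqrt ((if h p.1 ≤ p.2 then (1 : ℝ) else 0) ^ 2 +
          (if g p.2 ≤ p.1 then (1 : ℝ) else 0) ^ 2)) =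
    1 - (2 - Real.sqrt 2) * (volume {p : unitInterval × unitInterval |
        (0 < p.1 ∧ p.1 < 1 ∧ 0 < p.2 ∧ p.2 < 1) ∧ h p.1 ≤ p.2 ∧ g p.2 ≤ p.1}).toReal := by
  have hhm : Measurable h := hmp.measurable
  set ν : Measure (unitInterval × unitInterval) := volume with hν
  have hprob : IsProbabilityMeasure ν := by
    rw [hν, Measure.volume_eq_prod]; infer_instance
  set A : Set (unitInterval × unitInterval) := {p | h p.1 ≤ p.2} with hA_def
  set B : Set (unitInterval × unitInterval) := {p | g p.2 ≤ p.1} with hB_def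
  set S : Set (unitInterval × unitInterval) :=
    {p | 0 < p.1 ∧ p.1 < 1 ∧ 0 < p.2 ∧ p.2 < 1} with hS_def
  have hA_meas : MeasurableSet A := measurableSet_le (hhm.comp measurable_fst) measurable_snd
  have hB_meas : MeasurableSet B := measurableSet_le (hgmeas.comp measurable_snd) measurable_fst
  -- S is conull
  have hedge : ∀ a : unitInterval,
      ν {p : unitInterval × unitInterval | p.1 = a} = 0 ∧
      ν {p : unitInterval × unitInterval | p.2 = a} = 0 := by
    intro a
    constructor
    · have : {p : unitInterval × unitInterval | p.1 = a}
          = (({a} : Set unitInterval) ×ˢ (univ : Set unitInterval)) := by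
        ext p
        simp only [Set.mem_prod, Set.mem_singleton_iff, Set.mem_univ, and_true, Set.mem_setOf_eq]
      rw [this, hν, Measure.volume_eq_prod, Measure.prod_prod, aux_vol_singleton, zero_mul]
    · have : {p : unitInterval × unitInterval | p.2 = a}
          = ((univ : Set unitInterval) ×ˢ ({a} : Set unitInterval)) := by
        ext p
        simp only [Set.mem_prod, Set.mem_singleton_iff, Set.mem_univ, true_and, Set.mem_setOf_eq]
      rw [this, hν, Measure.volume_eq_prod, Measure.prod_prod, aux_vol_singleton, mul_zero]
  have hScompl : ν Sᶜ = 0 := by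
    apply measure_mono_null (t := {p : unitInterval × unitInterval | p.1 = 0} ∪
      ({p | p.1 = 1} ∪ ({p | p.2 = 0} ∪ {p | p.2 = 1})))
    · intro p hp
      simp only [hS_def, mem_compl_iff, mem_setOf_eq, not_and_or, not_lt] at hp
      rcases hp with h1 | h1 | h1 | h1
      · exact Or.inl (le_antisymm h1 unitInterval.nonneg')
      · exact Or.inr (Or.inl (le_antisymm unitInterval.le_one' h1))
      · exact Or.inr (Or.inr (Or.inl (le_antisymm h1 unitInterval.nonneg')))
      · exact Or.inr (Or.inr (Or.inr (le_antisymm unitInterval.le_one' h1)))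
    · rw [measure_union_null_iff, measure_union_null_iff, measure_union_null_iff]
      exact ⟨(hedge 0).1, (hedge 1).1, (hedge 0).2, (hedge 1).2⟩
  have hSae : ∀ᵐ p ∂ν, p ∈ S := by
    rw [ae_iff]; exact hScompl
  -- measures of A and B
  have hA_half : ν A = ENNReal.ofReal (1/2) := by
    rw [hν, Measure.volume_eq_prod, Measure.prod_apply hA_meas]
    have : ∀ u : unitInterval, (Prod.mk u ⁻¹' A) = Ici (h u) := fun u => rfl
    simp_rw [this, aux_vol_Ici]
    rw [hmp.lintegral_comp (f := fun x : unitInterval => ENNReal.ofReal (1 - x))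
      ((measurable_const.sub measurable_subtype_coe).ennreal_ofReal)]
    exact aux_lint
  have hB_half : ν B = ENNReal.ofReal (1/2) := by
    rw [hν, Measure.volume_eq_prod, Measure.prod_apply_symm hB_meas]
    have : ∀ v : unitInterval, ((fun u => (u, v)) ⁻¹' B) = Ici (g v) := fun v => rfl
    simp_rw [this, aux_vol_Ici]
    rw [hgmp.lintegral_comp (f := fun x : unitInterval => ENNReal.ofReal (1 - x))
      ((measurable_const.sub measurable_subtype_coe).ennreal_ofReal)]
    exact aux_lint
  -- real-valued measures
  set a : ℝ := (ν (A \ B)).toReal with ha_def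
  set b : ℝ := (ν (B \ A)).toReal with hb_def
  set m : ℝ := (ν (A ∩ B)).toReal with hm_def
  have hfin : ∀ s : Set (unitInterval × unitInterval), ν s ≠ ⊤ := fun s => measure_ne_top ν s
  have ha : a + m = 1/2 := by
    have := measure_diff_add_inter A hB_meas (μ := ν)
    rw [hA_half] at this
    have := congrArg ENNReal.toReal this
    rwa [ENNReal.toReal_add (hfin _) (hfin _), ENNReal.toReal_ofReal (by norm_num)] at this
  have hb : b + m = 1/2 := by
    have := measure_diff_add_inter B hA_meas (μ := ν)
    rw [hB_half, inter_comm] at this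
    have := congrArg ENNReal.toReal this
    rwa [ENNReal.toReal_add (hfin _) (hfin _), ENNReal.toReal_ofReal (by norm_num)] at this
  set D : Set (unitInterval × unitInterval) := (A \ B) ∪ (B \ A) with hD_def
  have hC_meas : MeasurableSet (A ∩ B) := hA_meas.inter hB_meas
  have hD_meas : MeasurableSet D := (hA_meas.diff hB_meas).union (hB_meas.diff hA_meas)
  have hDval : (ν D).toReal = a + b := by
    rw [hD_def, measure_union (disjoint_sdiff_sdiff) (hB_meas.diff hA_meas),
      ENNReal.toReal_add (hfin _) (hfin _)]
  -- rewrite the integrand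
  have hfun : ∀ p : unitInterval × unitInterval,
      Real.sqrt ((if h p.1 ≤ p.2 then (1 : ℝ) else 0) ^ 2 +
        (if g p.2 ≤ p.1 then (1 : ℝ) else 0) ^ 2)
      = D.indicator (fun _ => (1:ℝ)) p + (A ∩ B).indicator (fun _ => Real.sqrt 2) p := by
    intro p
    by_cases hA1 : h p.1 ≤ p.2 <;> by_cases hB1 : g p.2 ≤ p.1 <;>
      simp [Set.indicator_apply, hD_def, hA_def, hB_def, hA1, hB1, Set.mem_diff,
        Set.mem_setOf_eq] <;> norm_num
  -- main integral computation
  have hInt1 : Integrable (D.indicator (fun _ => (1:ℝ))) ν :=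
    (integrable_const (1:ℝ)).indicator hD_meas
  have hInt2 : Integrable ((A ∩ B).indicator (fun _ => Real.sqrt 2)) ν :=
    (integrable_const _).indicator hC_meas
  have hLHS : (∫ p in S, Real.sqrt ((if h p.1 ≤ p.2 then (1 : ℝ) else 0) ^ 2 +
      (if g p.2 ≤ p.1 then (1 : ℝ) else 0) ^ 2) ∂ν)
      = (a + b) + m * Real.sqrt 2 := by
    rw [Measure.restrict_eq_self_of_ae_mem hSae]
    calc (∫ p, Real.sqrt ((if h p.1 ≤ p.2 then (1 : ℝ) else 0) ^ 2 +
        (if g p.2 ≤ p.1 then (1 : ℝ) else 0) ^ 2) ∂ν)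
        = ∫ p, (D.indicator (fun _ => (1:ℝ)) p + (A ∩ B).indicator (fun _ => Real.sqrt 2) p) ∂ν := by
          exact integral_congr_ae (Filter.Eventually.of_forall hfun)
      _ = (ν D).toReal • (1:ℝ) + (ν (A ∩ B)).toReal • Real.sqrt 2 := by
          rw [integral_add hInt1 hInt2, integral_indicator_const _ hD_meas,
            integral_indicator_const _ hC_meas]
          rfl
      _ = (a + b) + m * Real.sqrt 2 := by
          rw [hDval]; simp [smul_eq_mul, hm_def]
  -- RHS measure
  have hRHS : (volume {p : unitInterval × unitInterval |
      (0 < p.1 ∧ p.1 < 1 ∧ 0 < p.2 ∧ p.2 < 1) ∧ h p.1 ≤ p.2 ∧ g p.2 ≤ p.1}).toReal = m := by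
    have hset : {p : unitInterval × unitInterval |
        (0 < p.1 ∧ p.1 < 1 ∧ 0 < p.2 ∧ p.2 < 1) ∧ h p.1 ≤ p.2 ∧ g p.2 ≤ p.1}
        = (A ∩ B) ∩ S := by
      ext p
      simp only [mem_setOf_eq, mem_inter_iff, hA_def, hB_def, hS_def]
      tauto
    rw [hset, hm_def]
    congr 1
    exact measure_inter_conull hScompl
  rw [hLHS, hRHS]
  linear_combination ha + hb
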